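/- If the binomial coefficient C(s+t, s) is invertible in R, then Z_{s+t}(φ, M) is a direct summand of Z_s(φ, Z_t(φ,M)), the module of Koszul s-cycles of φ with coefficients in the R-module Z_t(φ,M). -/

import Mathlib

open Finset

section Koszul

variable {R : Type} [CommRing R] {ι : Type} [Fintype ι] [LinearOrder ι]

/-- The Koszul differential on `⋀ F ⊗ M`, modelled as `Finset ι → M`, for the Koszul
complex of the family `u : ι → R` with coefficients in `M`. -/
noncomputable def kD (u : ι → R) (M : Type) [AddCommGroup M] [Module R M] :
    (Finset ι → M) →ₗ[R] (Finset ι → M) where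
  toFun f := fun J => ∑ i ∈ Jᶜ, ((-1 : ℤ) ^ (J.filter (· < i)).card) • u i • f (insert i J)
  map_add' f g := by
    funext J
    simp [smul_add, Finset.sum_add_distrib]
  map_smul' r f := by
    funext J
    simp only [Pi.smul_apply, RingHom.id_apply]
    rw [Finset.smul_sum]
    refine Finset.sum_congr rfl fun i _ => ?_
    rw [smul_comm (u i) r, smul_comm ((-1 : ℤ) ^ (J.filter (· < i)).card) r]

variable (u : ι → R) (M : Type) [AddCommGroup M] [Module R M]

/-- The homological degree `t` part `K_t` of the Koszul complex, i.e. the elements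
supported on subsets of cardinality `t`. -/
def kSupp (t : ℕ) : Submodule R (Finset ι → M) where
  carrier := {f | ∀ J : Finset ι, J.card ≠ t → f J = 0}
  add_mem' := by
    intro f g hf hg J hJ
    simp [Pi.add_apply, hf J hJ, hg J hJ]
  zero_mem' := by intro J hJ; rfl
  smul_mem' := by
    intro c f hf J hJ
    simp [Pi.smul_apply, hf J hJ]

/-- Koszul cycles `Z_t(u, M)`. -/
noncomputable def kZ (t : ℕ) : Submodule R (Finset ι → M) :=
  kSupp M t ⊓ LinearMap.ker (kD u M)

/-- Koszul boundaries `B_t(u, M)`. -/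
noncomputable def kB (t : ℕ) : Submodule R (Finset ι → M) :=
  kSupp M t ⊓ Submodule.map (kD u M) (kSupp M (t + 1))

/-- The sign `σ(A,B) = (-1)^{#{(a,b) ∈ A×B : a > b}}`. -/
def ksign (A B : Finset ι) : ℤ := (-1) ^ ((A ×ˢ B).filter fun p => p.2 < p.1).card

/-- The multiplication `K(u,R) ⊗ K(u,M) → K(u,M)` of the Koszul complex, viewed as a module
over the exterior algebra. -/
def kMul (a : Finset ι → R) (f : Finset ι → M) : Finset ι → M :=
  fun J => ∑ A ∈ J.powerset, ksign A (J \ A) • a A • f (J \ A)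

/-- The identity element of the Koszul algebra `K(u,R)`. -/
def kOne : Finset ι → R := fun J => if J = ∅ then 1 else 0

/-- Iterated Koszul product of a list of elements of `K(u,R)`. -/
def kProd (l : List (Finset ι → R)) : Finset ι → R := l.foldr (kMul R) kOne

end Koszul



set_option linter.unusedSectionVars false

section SignLemmas
variable {ι : Type} [Fintype ι] [LinearOrder ι]

def eps (J : Finset ι) (i : ι) : ℤ := (-1) ^ (J.filter (· < i)).card
lemma neg_one_pow_mul_self (n : ℕ) : ((-1 : ℤ)) ^ n * (-1) ^ n = 1 := by
  rw [← pow_add, ← two_mul, pow_mul, neg_one_sq, one_pow]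
lemma eps_sq (J : Finset ι) (i : ι) : eps J i * eps J i = 1 := neg_one_pow_mul_self _
lemma ksign_eq (A B : Finset ι) :
    ksign A B = (-1) ^ (∑ a ∈ A, (B.filter (· < a)).card) := by
  unfold ksign
  congr 1
  rw [Finset.card_filter, Finset.sum_product]
  exact Finset.sum_congr rfl fun a _ => (Finset.card_filter _ _).symm
lemma eps_union {A B : Finset ι} (h : Disjoint A B) (i : ι) :
    eps (A ∪ B) i = eps A i * eps B i := by
  unfold eps
  rw [Finset.filter_union, Finset.card_union_of_disjoint
    (h.mono (filter_subset _ _) (filter_subset _ _)), pow_add]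
lemma ksign_insert_right {B : Finset ι} {i : ι} (hi : i ∉ B) (A : Finset ι) :
    ksign A (insert i B) = ksign A B * (-1) ^ ((A.filter (i < ·)).card) := by
  rw [ksign_eq, ksign_eq, ← pow_add]
  congr 1
  rw [Finset.card_filter, ← Finset.sum_add_distrib]
  refine Finset.sum_congr rfl fun a _ => ?_
  rw [Finset.filter_insert]
  by_cases h : i < a
  · rw [if_pos h, if_pos h,
      Finset.card_insert_of_notMem (fun hmem => hi (Finset.mem_filter.mp hmem).1)]
  · rw [if_neg h, if_neg h, add_zero]
lemma ksign_insert_left {A : Finset ι} {i : ι} (hi : i ∉ A) (B : Finset ι) :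
    ksign (insert i A) B = ksign A B * eps B i := by
  rw [ksign_eq, ksign_eq, Finset.sum_insert hi, eps, ← pow_add, add_comm]
lemma filter_gt_card {A : Finset ι} {i : ι} (hi : i ∉ A) :
    (A.filter (· < i)).card + (A.filter (i < ·)).card = A.card := by
  have h : A.filter (i < ·) = A.filter (fun a => ¬ a < i) := by
    refine Finset.filter_congr fun a ha => ?_
    constructor
    · exact fun h h2 => absurd (h.trans h2) (lt_irrefl i)
    · exact fun h2 => (not_lt.mp h2).lt_of_ne (fun e => hi (e ▸ ha))
  rw [h]
  exact Finset.card_filter_add_card_filter_not _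
lemma pow_filter_gt {A : Finset ι} {i : ι} (hi : i ∉ A) :
    ((-1 : ℤ)) ^ ((A.filter (i < ·)).card) = (-1) ^ A.card * eps A i := by
  rw [← filter_gt_card hi, pow_add, eps]
  linear_combination (-(-1:ℤ) ^ (A.filter (i < ·)).card) *
    neg_one_pow_mul_self (A.filter (· < i)).card
lemma sign_j1 {J K : Finset ι} {i : ι} (hiJ : i ∉ J) (hiK : i ∉ K) (h : Disjoint J K) :
    eps K i * ksign J (insert i K) = ((-1) ^ J.card * ksign J K) * eps (J ∪ K) i := by
  rw [ksign_insert_right hiK, pow_filter_gt hiJ, eps_union h]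
  ring
lemma sign_j2 {J K : Finset ι} {i : ι} (hiJ : i ∉ J) (h : Disjoint J K) :
    eps J i * ksign (insert i J) K = ksign J K * eps (J ∪ K) i := by
  rw [ksign_insert_left hiJ, eps_union h]
  ring
lemma sign_p3 {J K : Finset ι} {i : ι} (hiJ : i ∉ J) (hiK : i ∉ K) :
    ((-1) ^ (insert i J).card * ksign (insert i J) K) * eps K i
      = -(ksign J (insert i K) * eps J i) := by
  rw [Finset.card_insert_of_notMem hiJ, ksign_insert_left hiJ,
    ksign_insert_right hiK, pow_filter_gt hiJ, pow_succ]
  linear_combination (-(-1:ℤ) ^ J.card * ksign J K) * eps_sq K i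
    + ((-1:ℤ) ^ J.card * ksign J K) * eps_sq J i
lemma ksign_sq_smul {M : Type} [AddCommGroup M] (A B : Finset ι) (x : M) :
    ksign A B • ksign A B • x = x := by
  rw [smul_smul, ksign, neg_one_pow_mul_self, one_smul]
end SignLemmas

section Aux
variable {R : Type} [CommRing R] {ι : Type} [Fintype ι] [LinearOrder ι]
variable (u : ι → R) {M : Type} [AddCommGroup M] [Module R M]

lemma kD_apply (f : Finset ι → M) (J : Finset ι) :
    kD u M f J = ∑ i ∈ Jᶜ, eps J i • u i • f (insert i J) := rfl

/-- The underlying function of the "décalage" map `j`. -/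
def jfun (s : ℕ) (f : Finset ι → M) : Finset ι → Finset ι → M :=
  fun J K => if J.card = s ∧ Disjoint J K then ksign J K • f (J ∪ K) else 0

lemma kZ_cycles {τ : ℕ} {f : Finset ι → M} (hf : f ∈ kZ u M τ) (L : Finset ι) :
    ∑ i ∈ Lᶜ, eps L i • u i • f (insert i L) = 0 := by
  rw [← kD_apply]
  have := hf.2
  rw [SetLike.mem_coe, LinearMap.mem_ker] at this
  rw [this]
  rfl

lemma kZ_supp {τ : ℕ} {f : Finset ι → M} (hf : f ∈ kZ u M τ) {L : Finset ι}
    (hL : L.card ≠ τ) : f L = 0 := hf.1 L hL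

lemma jfun_mem {s t : ℕ} {f : Finset ι → M} (hf : f ∈ kZ u M (s + t)) (J : Finset ι) :
    jfun s f J ∈ kZ u M t := by
  refine Submodule.mem_inf.mpr ⟨?_, ?_⟩
  · -- support
    intro K hK
    unfold jfun
    split_ifs with h
    · rw [kZ_supp u hf, smul_zero]
      rw [Finset.card_union_of_disjoint h.2, h.1]
      exact fun he => hK (by omega)
    · rfl
  · -- cycles
    rw [LinearMap.mem_ker]
    funext K
    rw [kD_apply]
    by_cases hs : J.card = s
    · by_cases hd : Disjoint J K
      · rw [← Finset.sum_subset (Finset.compl_subset_compl.mpr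
          (Finset.subset_union_right : K ⊆ J ∪ K))]
        · calc ∑ i ∈ (J ∪ K)ᶜ, eps K i • u i • jfun s f J (insert i K)
              = ∑ i ∈ (J ∪ K)ᶜ, ((-1) ^ J.card * ksign J K) •
                  (eps (J ∪ K) i • u i • f (insert i (J ∪ K))) := by
                refine Finset.sum_congr rfl fun i hi => ?_
                rw [Finset.mem_compl, Finset.mem_union] at hi
                push_neg at hi
                rw [jfun, if_pos ⟨hs, Finset.disjoint_insert_right.mpr ⟨hi.1, hd⟩⟩,
                  ← Finset.union_insert, smul_comm (u i), smul_smul,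
                  sign_j1 hi.1 hi.2 hd, Finset.union_insert, mul_smul, mul_smul]
            _ = ((-1) ^ J.card * ksign J K) •
                  ∑ i ∈ (J ∪ K)ᶜ, eps (J ∪ K) i • u i • f (insert i (J ∪ K)) := by
                rw [Finset.smul_sum]
            _ = 0 := by rw [kZ_cycles u hf, smul_zero]
        · intro i hiK hiJK
          have hiJ : i ∈ J := by
            rw [Finset.mem_compl] at hiK hiJK
            push_neg at hiJK
            rcases Finset.mem_union.mp hiJK with h | h
            · exact h
            · exact absurd h hiK
          rw [jfun, if_neg, smul_zero, smul_zero]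
          rintro ⟨-, hdis⟩
          exact (Finset.disjoint_insert_right.mp hdis).1 hiJ
      · refine Finset.sum_eq_zero fun i _ => ?_
        rw [jfun, if_neg, smul_zero, smul_zero]
        rintro ⟨-, hdis⟩
        exact hd (hdis.mono_right (Finset.subset_insert i K))
    · refine Finset.sum_eq_zero fun i _ => ?_
      rw [jfun, if_neg, smul_zero, smul_zero]
      rintro ⟨h, -⟩
      exact hs h

/-- The bundled "décalage" element `j(f) ∈ Z_s(u, Z_t(u,M))`. -/
def jelt (s t : ℕ) (f : Finset ι → M) (hf : f ∈ kZ u M (s + t)) :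
    Finset ι → ↥(kZ u M t) := fun J => ⟨jfun s f J, jfun_mem u hf J⟩

lemma jelt_mem {s t : ℕ} {f : Finset ι → M} (hf : f ∈ kZ u M (s + t)) :
    jelt u s t f hf ∈ kZ u (↥(kZ u M t)) s := by
  refine Submodule.mem_inf.mpr ⟨?_, ?_⟩
  · intro J hJ
    refine Subtype.ext (funext fun K => ?_)
    rw [jelt]
    show jfun s f J K = _
    rw [jfun, if_neg (fun h => hJ h.1)]
    rfl
  · rw [LinearMap.mem_ker]
    funext J'
    refine Subtype.ext (funext fun K => ?_)
    rw [kD_apply]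
    push_cast [AddSubmonoidClass.coe_finset_sum]
    simp only [Finset.sum_apply, Pi.smul_apply]
    show ∑ i ∈ J'ᶜ, eps J' i • u i • jfun s f (insert i J') K = _
    have hrhs : ((0 : Finset ι → ↥(kZ u M t)) J' : Finset ι → M) K = 0 := rfl
    rw [hrhs]
    by_cases hs : J'.card + 1 = s
    · by_cases hd : Disjoint J' K
      · rw [← Finset.sum_subset (Finset.compl_subset_compl.mpr
          (Finset.subset_union_left : J' ⊆ J' ∪ K))]
        · calc ∑ i ∈ (J' ∪ K)ᶜ, eps J' i • u i • jfun s f (insert i J') K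
              = ∑ i ∈ (J' ∪ K)ᶜ, ksign J' K •
                  (eps (J' ∪ K) i • u i • f (insert i (J' ∪ K))) := by
                refine Finset.sum_congr rfl fun i hi => ?_
                rw [Finset.mem_compl, Finset.mem_union] at hi
                push_neg at hi
                rw [jfun, if_pos ⟨by rw [Finset.card_insert_of_notMem hi.1]; exact hs,
                    Finset.disjoint_insert_left.mpr ⟨hi.2, hd⟩⟩,
                  Finset.insert_union, smul_comm (u i), smul_smul,
                  sign_j2 hi.1 hd, mul_smul]
            _ = ksign J' K •
                  ∑ i ∈ (J' ∪ K)ᶜ, eps (J' ∪ K) i • u i • f (insert i (J' ∪ K)) := by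
                rw [Finset.smul_sum]
            _ = 0 := by rw [kZ_cycles u hf, smul_zero]
        · intro i hi1 hi2
          have hiK : i ∈ K := by
            rw [Finset.mem_compl] at hi1 hi2
            push_neg at hi2
            rcases Finset.mem_union.mp hi2 with h | h
            · exact absurd h hi1
            · exact h
          rw [jfun, if_neg, smul_zero, smul_zero]
          rintro ⟨-, hdis⟩
          exact (Finset.disjoint_insert_left.mp hdis).1 hiK
      · refine Finset.sum_eq_zero fun i _ => ?_
        rw [jfun, if_neg, smul_zero, smul_zero]
        rintro ⟨-, hdis⟩
        exact hd (hdis.mono_left (Finset.subset_insert i J'))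
    · refine Finset.sum_eq_zero fun i hi => ?_
      rw [Finset.mem_compl] at hi
      rw [jfun, if_neg, smul_zero, smul_zero]
      rintro ⟨hc, -⟩
      rw [Finset.card_insert_of_notMem hi] at hc
      exact hs hc

/-- The underlying function of the retraction `p`. -/
def pfun (s : ℕ) (g : Finset ι → Finset ι → M) : Finset ι → M :=
  fun L => ∑ J ∈ L.powerset.filter (fun J => J.card = s),
    ksign J (L \ J) • g J (L \ J)

lemma compl_sdiff_eq {J L : Finset ι} (hJ : J ⊆ L) : (L \ J)ᶜ = Lᶜ ∪ J := by
  ext x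
  simp only [Finset.mem_compl, Finset.mem_sdiff, Finset.mem_union, not_and, not_not]
  constructor
  · intro h
    by_cases hx : x ∈ L
    · exact Or.inr (h hx)
    · exact Or.inl hx
  · rintro (h | h) hxL
    · exact absurd hxL h
    · exact h

lemma compl_eq_union_sdiff {J L : Finset ι} (hJ : J ⊆ L) : Jᶜ = Lᶜ ∪ (L \ J) := by
  ext x
  simp only [Finset.mem_compl, Finset.mem_union, Finset.mem_sdiff]
  constructor
  · intro h
    by_cases hx : x ∈ L
    · exact Or.inr ⟨hx, h⟩
    · exact Or.inl hx
  · rintro (h | h)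
    · exact fun hx => h (hJ hx)
    · exact h.2

lemma sdiff_erase_eq {J L : Finset ι} {i : ι} (hJ : J ⊆ L) (hi : i ∈ J) :
    L \ J.erase i = insert i (L \ J) := by
  ext x
  simp only [Finset.mem_sdiff, Finset.mem_erase, Finset.mem_insert, not_and]
  constructor
  · intro ⟨hxL, hx⟩
    by_cases hxi : x = i
    · exact Or.inl hxi
    · exact Or.inr ⟨hxL, fun hxJ => absurd (hx hxi) (fun h => h hxJ)⟩
  · rintro (h | h)
    · subst h
      exact ⟨hJ hi, fun hne => absurd rfl hne⟩
    · exact ⟨h.1, fun _ hxJ => absurd hxJ h.2⟩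

lemma insert_sdiff_insert_eq {J' L : Finset ι} {i : ι} (hiL : i ∉ L) :
    insert i L \ insert i J' = L \ J' := by
  ext x
  simp only [Finset.mem_sdiff, Finset.mem_insert, not_or]
  constructor
  · rintro ⟨h1 | h1, h2⟩
    · exact absurd h1 h2.1
    · exact ⟨h1, h2.2⟩
  · intro ⟨h1, h2⟩
    exact ⟨Or.inr h1, fun he => hiL (he ▸ h1), h2⟩

lemma pfun_supp {s t : ℕ} {g : Finset ι → Finset ι → M}
    (hg2 : ∀ J K, K.card ≠ t → g J K = 0) {L : Finset ι} (hL : L.card ≠ s + t) :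
    pfun s g L = 0 := by
  refine Finset.sum_eq_zero fun J hJ => ?_
  rw [Finset.mem_filter, Finset.mem_powerset] at hJ
  rw [hg2, smul_zero]
  rw [Finset.card_sdiff_of_subset hJ.1, hJ.2]
  have := Finset.card_le_card hJ.1
  omega

lemma sign_q1 {L J : Finset ι} {i : ι} (hJ : J ⊆ L) (hiL : i ∉ L) :
    eps L i * ksign J (insert i (L \ J))
      = ((-1) ^ J.card * ksign J (L \ J)) * eps (L \ J) i := by
  have h := sign_j1 (J := J) (K := L \ J) (i := i) (fun hi => hiL (hJ hi))
    (fun hi => hiL (Finset.mem_sdiff.mp hi).1) Finset.disjoint_sdiff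
  rw [Finset.union_sdiff_of_subset hJ] at h
  linear_combination (eps L i * eps (L \ J) i) * h
    - (eps L i * ksign J (insert i (L \ J))) * eps_sq (L \ J) i
    + (((-1 : ℤ) ^ J.card * ksign J (L \ J)) * eps (L \ J) i) * eps_sq L i

lemma sign_q2 {J' K : Finset ι} {i : ι} (hiJ : i ∉ J') (hd : Disjoint J' K) :
    eps (J' ∪ K) i * ksign (insert i J') K = ksign J' K * eps J' i := by
  rw [ksign_insert_left hiJ, eps_union hd]
  linear_combination (ksign J' K * eps J' i) * eps_sq K i

lemma pfun_cycles {s : ℕ} {g : Finset ι → Finset ι → M}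
    (hg3 : ∀ J K, ∑ i ∈ Kᶜ, eps K i • u i • g J (insert i K) = 0)
    (hg4 : ∀ J' K, ∑ i ∈ J'ᶜ, eps J' i • u i • g (insert i J') K = 0)
    (L : Finset ι) :
    ∑ i ∈ Lᶜ, eps L i • u i • pfun s g (insert i L) = 0 := by
  classical
  set Ps := L.powerset.filter (fun J => J.card = s) with hPs
  set Ps' := L.powerset.filter (fun J' => J'.card + 1 = s) with hPs'
  have step1 : ∀ i ∈ Lᶜ, eps L i • u i • pfun s g (insert i L)
      = (∑ J ∈ Ps, ((-1) ^ J.card * ksign J (L \ J)) •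
          (eps (L \ J) i • u i • g J (insert i (L \ J))))
        + ∑ J' ∈ Ps', ksign J' (L \ J') •
          (eps J' i • u i • g (insert i J') (L \ J')) := by
    intro i hi
    rw [Finset.mem_compl] at hi
    rw [pfun, Finset.smul_sum, Finset.smul_sum,
      ← Finset.sum_filter_add_sum_filter_not
        ((insert i L).powerset.filter (fun J => J.card = s)) (fun J => i ∉ J)]
    congr 1
    · -- the part with i ∉ J
      have hset : ((insert i L).powerset.filter (fun J => J.card = s)).filter
          (fun J => i ∉ J) = Ps := by
        rw [hPs]
        ext J
        simp only [Finset.mem_filter, Finset.mem_powerset]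
        constructor
        · rintro ⟨⟨h1, h2⟩, h3⟩
          exact ⟨(Finset.subset_insert_iff_of_notMem h3).mp h1, h2⟩
        · rintro ⟨h1, h2⟩
          exact ⟨⟨h1.trans (Finset.subset_insert i L), h2⟩, fun hiJ => hi (h1 hiJ)⟩
      rw [hset]
      refine Finset.sum_congr rfl fun J hJ => ?_
      rw [hPs, Finset.mem_filter, Finset.mem_powerset] at hJ
      have hiJ : i ∉ J := fun h => hi (hJ.1 h)
      rw [Finset.insert_sdiff_of_notMem _ hiJ, smul_comm (u i), smul_smul,
        sign_q1 hJ.1 hi, mul_smul]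
    · -- the part with i ∈ J
      refine Finset.sum_bij' (fun J _ => J.erase i) (fun J' _ => insert i J')
        ?_ ?_ ?_ ?_ ?_
      · intro J hJ
        rw [Finset.mem_filter, Finset.mem_filter, Finset.mem_powerset] at hJ
        have hiJ : i ∈ J := not_not.mp hJ.2
        rw [hPs', Finset.mem_filter, Finset.mem_powerset]
        constructor
        · intro x hx
          rw [Finset.mem_erase] at hx
          rcases Finset.mem_insert.mp (hJ.1.1 hx.2) with h | h
          · exact absurd h hx.1
          · exact h
        · rw [Finset.card_erase_of_mem hiJ, hJ.1.2]
          have : 0 < J.card := Finset.card_pos.mpr ⟨i, hiJ⟩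
          omega
      · intro J' hJ'
        rw [hPs', Finset.mem_filter, Finset.mem_powerset] at hJ'
        have hiJ' : i ∉ J' := fun h => hi (hJ'.1 h)
        rw [Finset.mem_filter, Finset.mem_filter, Finset.mem_powerset]
        refine ⟨⟨Finset.insert_subset_insert i hJ'.1, ?_⟩, ?_⟩
        · rw [Finset.card_insert_of_notMem hiJ', hJ'.2]
        · exact not_not.mpr (Finset.mem_insert_self i J')
      · intro J hJ
        rw [Finset.mem_filter] at hJ
        exact Finset.insert_erase (not_not.mp hJ.2)
      · intro J' hJ'
        rw [hPs', Finset.mem_filter, Finset.mem_powerset] at hJ'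
        exact Finset.erase_insert (fun h => hi (hJ'.1 h))
      · intro J hJ
        rw [Finset.mem_filter, Finset.mem_filter, Finset.mem_powerset] at hJ
        have hiJ : i ∈ J := not_not.mp hJ.2
        have herase : J.erase i ⊆ L := by
          intro x hx
          rw [Finset.mem_erase] at hx
          rcases Finset.mem_insert.mp (hJ.1.1 hx.2) with h | h
          · exact absurd h hx.1
          · exact h
        have hkey : insert i L \ J = L \ J.erase i := by
          conv_lhs => rw [← Finset.insert_erase hiJ]
          exact insert_sdiff_insert_eq hi
        have hs2 := sign_q2 (J' := J.erase i) (K := L \ J.erase i) (i := i)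
          (Finset.notMem_erase i J) Finset.disjoint_sdiff
        rw [Finset.union_sdiff_of_subset herase, Finset.insert_erase hiJ] at hs2
        rw [hkey, smul_comm (u i), smul_smul, hs2, mul_smul]
        show _ = ksign (J.erase i) (L \ J.erase i) •
          (eps (J.erase i) i • u i • g (insert i (J.erase i)) (L \ J.erase i))
        rw [Finset.insert_erase hiJ]
  have splitA : ∀ J ∈ Ps, (∑ i ∈ Lᶜ, eps (L \ J) i • u i • g J (insert i (L \ J)))
      = -∑ i ∈ J, eps (L \ J) i • u i • g J (insert i (L \ J)) := by
    intro J hJ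
    rw [hPs, Finset.mem_filter, Finset.mem_powerset] at hJ
    have h0 := hg3 J (L \ J)
    rw [compl_sdiff_eq hJ.1, Finset.sum_union (Finset.disjoint_left.mpr
      (fun x hx hxJ => (Finset.mem_compl.mp hx) (hJ.1 hxJ)))] at h0
    exact eq_neg_of_add_eq_zero_left h0
  have splitB : ∀ J' ∈ Ps', (∑ i ∈ Lᶜ, eps J' i • u i • g (insert i J') (L \ J'))
      = -∑ i ∈ L \ J', eps J' i • u i • g (insert i J') (L \ J') := by
    intro J' hJ'
    rw [hPs', Finset.mem_filter, Finset.mem_powerset] at hJ'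
    have h0 := hg4 J' (L \ J')
    rw [compl_eq_union_sdiff hJ'.1, Finset.sum_union (Finset.disjoint_left.mpr
      (fun x hx hxL => (Finset.mem_compl.mp hx) (Finset.mem_sdiff.mp hxL).1))] at h0
    exact eq_neg_of_add_eq_zero_left h0
  have hA : (∑ J ∈ Ps, ∑ i ∈ Lᶜ, ((-1) ^ J.card * ksign J (L \ J)) •
        (eps (L \ J) i • u i • g J (insert i (L \ J))))
      = -∑ J ∈ Ps, ∑ i ∈ J, ((-1) ^ J.card * ksign J (L \ J)) •
        (eps (L \ J) i • u i • g J (insert i (L \ J))) := by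
    rw [← Finset.sum_neg_distrib]
    refine Finset.sum_congr rfl fun J hJ => ?_
    rw [← Finset.smul_sum, splitA J hJ, smul_neg, Finset.smul_sum]
  have hB : (∑ J' ∈ Ps', ∑ i ∈ Lᶜ, ksign J' (L \ J') •
        (eps J' i • u i • g (insert i J') (L \ J')))
      = -∑ J' ∈ Ps', ∑ i ∈ L \ J', ksign J' (L \ J') •
        (eps J' i • u i • g (insert i J') (L \ J')) := by
    rw [← Finset.sum_neg_distrib]
    refine Finset.sum_congr rfl fun J' hJ' => ?_
    rw [← Finset.smul_sum, splitB J' hJ', smul_neg, Finset.smul_sum]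
  have hmatch : (∑ J ∈ Ps, ∑ i ∈ J, ((-1) ^ J.card * ksign J (L \ J)) •
        (eps (L \ J) i • u i • g J (insert i (L \ J))))
      = -∑ J' ∈ Ps', ∑ i ∈ L \ J', ksign J' (L \ J') •
        (eps J' i • u i • g (insert i J') (L \ J')) := by
    rw [Finset.sum_sigma', Finset.sum_sigma', ← Finset.sum_neg_distrib]
    refine Finset.sum_bij' (fun x _ => ⟨x.1.erase x.2, x.2⟩)
      (fun y _ => ⟨insert y.2 y.1, y.2⟩) ?_ ?_ ?_ ?_ ?_
    · rintro ⟨J, i⟩ hx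
      rw [Finset.mem_sigma] at hx
      rw [hPs, Finset.mem_filter, Finset.mem_powerset] at hx
      obtain ⟨⟨hJL, hJc⟩, hiJ⟩ := hx
      rw [Finset.mem_sigma, hPs', Finset.mem_filter, Finset.mem_powerset]
      refine ⟨⟨(Finset.erase_subset i J).trans hJL, ?_⟩, ?_⟩
      · have hJc' : J.card = s := hJc
        rw [Finset.card_erase_of_mem hiJ, hJc']
        have : 0 < s := hJc' ▸ Finset.card_pos.mpr ⟨i, hiJ⟩
        omega
      · exact Finset.mem_sdiff.mpr ⟨hJL hiJ, Finset.notMem_erase i J⟩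
    · rintro ⟨J', i⟩ hy
      rw [Finset.mem_sigma] at hy
      rw [hPs', Finset.mem_filter, Finset.mem_powerset] at hy
      obtain ⟨⟨hJL, hJc⟩, hiL⟩ := hy
      rw [Finset.mem_sdiff] at hiL
      rw [Finset.mem_sigma, hPs, Finset.mem_filter, Finset.mem_powerset]
      refine ⟨⟨Finset.insert_subset hiL.1 hJL, ?_⟩, Finset.mem_insert_self i J'⟩
      rw [Finset.card_insert_of_notMem hiL.2, hJc]
    · rintro ⟨J, i⟩ hx
      rw [Finset.mem_sigma] at hx
      show (⟨insert i (J.erase i), i⟩ : (_ : Finset ι) × ι) = ⟨J, i⟩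
      rw [Finset.insert_erase hx.2]
    · rintro ⟨J', i⟩ hy
      rw [Finset.mem_sigma] at hy
      rw [hPs', Finset.mem_filter, Finset.mem_powerset] at hy
      rw [Finset.mem_sdiff] at hy
      show (⟨(insert i J').erase i, i⟩ : (_ : Finset ι) × ι) = ⟨J', i⟩
      rw [Finset.erase_insert hy.2.2]
    · rintro ⟨J, i⟩ hx
      rw [Finset.mem_sigma] at hx
      rw [hPs, Finset.mem_filter, Finset.mem_powerset] at hx
      obtain ⟨⟨hJL, hJc⟩, hiJ⟩ := hx
      show ((-1 : ℤ) ^ J.card * ksign J (L \ J)) •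
          (eps (L \ J) i • u i • g J (insert i (L \ J)))
        = -(ksign (J.erase i) (L \ J.erase i) •
          (eps (J.erase i) i • u i • g (insert i (J.erase i)) (L \ J.erase i)))
      rw [sdiff_erase_eq hJL hiJ, Finset.insert_erase hiJ]
      have hp3 := sign_p3 (J := J.erase i) (K := L \ J) (i := i)
        (Finset.notMem_erase i J) (fun h => (Finset.mem_sdiff.mp h).2 hiJ)
      rw [Finset.insert_erase hiJ] at hp3
      rw [smul_smul, smul_smul, hp3, neg_smul]
  rw [Finset.sum_congr rfl step1, Finset.sum_add_distrib,
    Finset.sum_comm (s := Lᶜ), Finset.sum_comm (s := Lᶜ), hA, hB, hmatch]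
  abel

lemma hg4_of_mem {s t : ℕ} {g : Finset ι → ↥(kZ u M t)}
    (hg : g ∈ kZ u (↥(kZ u M t)) s) (J' K : Finset ι) :
    ∑ i ∈ J'ᶜ, eps J' i • u i • ((g (insert i J') : Finset ι → M) K) = 0 := by
  have h2 := hg.2
  rw [SetLike.mem_coe, LinearMap.mem_ker] at h2
  have h := congrFun h2 J'
  rw [kD_apply] at h
  have h3 := congrArg (fun v : ↥(kZ u M t) => (v : Finset ι → M) K) h
  push_cast [AddSubmonoidClass.coe_finset_sum] at h3
  simpa [Finset.sum_apply] using h3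

lemma pelt_mem {s t : ℕ} {g : Finset ι → ↥(kZ u M t)}
    (hg : g ∈ kZ u (↥(kZ u M t)) s) :
    pfun s (fun J K => (g J : Finset ι → M) K) ∈ kZ u M (s + t) := by
  refine Submodule.mem_inf.mpr ⟨?_, ?_⟩
  · intro L hL
    exact pfun_supp (t := t) (fun J K hK => kZ_supp u (g J).2 hK) hL
  · rw [LinearMap.mem_ker]
    funext L
    rw [kD_apply]
    exact pfun_cycles u (fun J K => kZ_cycles u (g J).2 K) (hg4_of_mem u hg) L

/-- The map `j` as a linear map. -/
noncomputable def jlin (s t : ℕ) : ↥(kZ u M (s + t)) →ₗ[R] ↥(kZ u (↥(kZ u M t)) s) where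
  toFun f := ⟨jelt u s t f.1 f.2, jelt_mem u f.2⟩
  map_add' f f' := by
    refine Subtype.ext (funext fun J => Subtype.ext (funext fun K => ?_))
    show jfun s ((f : Finset ι → M) + (f' : Finset ι → M)) J K
      = jfun s (f : Finset ι → M) J K + jfun s (f' : Finset ι → M) J K
    rw [jfun, jfun, jfun]
    split_ifs with h
    · rw [Pi.add_apply, smul_add]
    · rw [add_zero]
  map_smul' r f := by
    refine Subtype.ext (funext fun J => Subtype.ext (funext fun K => ?_))
    show jfun s (r • (f : Finset ι → M)) J K = r • jfun s (f : Finset ι → M) J K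
    rw [jfun, jfun]
    split_ifs with h
    · rw [Pi.smul_apply, smul_comm]
    · rw [smul_zero]

/-- The retraction `p` as a linear map, with `r₀` the inverse of the binomial coefficient. -/
noncomputable def plin (s t : ℕ) (r₀ : R) :
    ↥(kZ u (↥(kZ u M t)) s) →ₗ[R] ↥(kZ u M (s + t)) where
  toFun g := ⟨r₀ • pfun s (fun J K => ((g : Finset ι → ↥(kZ u M t)) J : Finset ι → M) K),
    Submodule.smul_mem _ r₀ (pelt_mem u g.2)⟩
  map_add' g g' := by
    refine Subtype.ext (funext fun L => ?_)
    show r₀ • pfun s (fun J K => (((g : Finset ι → ↥(kZ u M t)) + (g' : Finset ι → ↥(kZ u M t))) J : Finset ι → M) K) L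
      = r₀ • pfun s (fun J K => ((g : Finset ι → ↥(kZ u M t)) J : Finset ι → M) K) L
        + r₀ • pfun s (fun J K => ((g' : Finset ι → ↥(kZ u M t)) J : Finset ι → M) K) L
    have hpf : pfun s (fun J K => (((g : Finset ι → ↥(kZ u M t)) + (g' : Finset ι → ↥(kZ u M t))) J : Finset ι → M) K) L
        = pfun s (fun J K => ((g : Finset ι → ↥(kZ u M t)) J : Finset ι → M) K) L
          + pfun s (fun J K => ((g' : Finset ι → ↥(kZ u M t)) J : Finset ι → M) K) L := by
      rw [pfun, pfun, pfun, ← Finset.sum_add_distrib]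
      refine Finset.sum_congr rfl fun J _ => ?_
      show ksign J (L \ J) • ((((g : Finset ι → ↥(kZ u M t)) J : Finset ι → M)
          + ((g' : Finset ι → ↥(kZ u M t)) J : Finset ι → M)) (L \ J)) = _
      rw [Pi.add_apply, smul_add]
    rw [hpf, smul_add]
  map_smul' r g := by
    refine Subtype.ext (funext fun L => ?_)
    show r₀ • pfun s (fun J K => ((r • (g : Finset ι → ↥(kZ u M t))) J : Finset ι → M) K) L
      = r • (r₀ • pfun s (fun J K => ((g : Finset ι → ↥(kZ u M t)) J : Finset ι → M) K) L)
    have hpf : pfun s (fun J K => ((r • (g : Finset ι → ↥(kZ u M t))) J : Finset ι → M) K) L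
        = r • pfun s (fun J K => ((g : Finset ι → ↥(kZ u M t)) J : Finset ι → M) K) L := by
      rw [pfun, pfun, Finset.smul_sum]
      refine Finset.sum_congr rfl fun J _ => ?_
      show ksign J (L \ J) • ((r • ((g : Finset ι → ↥(kZ u M t)) J : Finset ι → M)) (L \ J)) = _
      rw [Pi.smul_apply, smul_comm]
    rw [hpf, smul_comm]

end Aux

/-- If the binomial coefficient `C(s+t,s)` is invertible in `R`, then `Z_{s+t}(φ,M)` is a
direct summand of `Z_s(φ, Z_t(φ,M))`, the module of Koszul `s`-cycles of `φ` with
coefficients in the `R`-module `Z_t(φ,M)`.  Here `φ : F → R` is the linear map on the free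
module `F` with basis `(e_i)_{i ∈ ι}`, determined by `u i = φ(e_i)`. -/
theorem cycles_direct_summand {R : Type} [CommRing R] {ι : Type} [Fintype ι] [LinearOrder ι]
    (u : ι → R) (M : Type) [AddCommGroup M] [Module R M] (s t : ℕ)
    (hinv : IsUnit (((s + t).choose s : ℕ) : R)) :
    ∃ (j : ↥(kZ u M (s + t)) →ₗ[R] ↥(kZ u (↥(kZ u M t)) s))
      (p : ↥(kZ u (↥(kZ u M t)) s) →ₗ[R] ↥(kZ u M (s + t))),
      p.comp j = LinearMap.id := by
  refine ⟨jlin u s t, plin u s t ((hinv.unit⁻¹ : Rˣ) : R), ?_⟩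
  refine LinearMap.ext fun f => ?_
  refine Subtype.ext (funext fun L => ?_)
  show ((hinv.unit⁻¹ : Rˣ) : R) •
      pfun s (fun J K => jfun s (f : Finset ι → M) J K) L = (f : Finset ι → M) L
  have hpf : pfun s (fun J K => jfun s (f : Finset ι → M) J K) L
      = (L.card.choose s) • (f : Finset ι → M) L := by
    rw [pfun]
    have hterm : ∀ J ∈ L.powerset.filter (fun J => J.card = s),
        ksign J (L \ J) • jfun s (f : Finset ι → M) J (L \ J)
          = (f : Finset ι → M) L := by
      intro J hJ
      rw [Finset.mem_filter, Finset.mem_powerset] at hJ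
      rw [jfun, if_pos ⟨hJ.2, Finset.disjoint_sdiff⟩,
        Finset.union_sdiff_of_subset hJ.1, ksign_sq_smul]
    rw [Finset.sum_congr rfl hterm, Finset.sum_const, ← Finset.powersetCard_eq_filter,
      Finset.card_powersetCard]
  rw [hpf]
  by_cases hL : L.card = s + t
  · rw [hL, ← Nat.cast_smul_eq_nsmul R, smul_smul]
    have h1 : ((hinv.unit⁻¹ : Rˣ) : R) * (((s + t).choose s : ℕ) : R) = 1 := by
      exact hinv.val_inv_mul
    rw [h1, one_smul]
  · rw [kZ_supp u f.2 hL, smul_zero, smul_zero]
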